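/- Let F be a field and k ≥ 1. If X₁ ≠ X₂ are two distinct (k+1)×k matrices over F, then there is at most one θ-space containing both X₁ and X₂. -/

import Mathlib

/-- The θ-space determined by a matrix `X` and a vector `a`. -/
def theta {F : Type*} [Field F] {k : ℕ} (X : Matrix (Fin (k + 1)) (Fin k) F)
    (a : Fin (k + 1) → F) : Set (Matrix (Fin (k + 1)) (Fin k) F) :=
  {Z | ∃ u : Fin k → F, Z = X + Matrix.vecMulVec a u}

lemma theta_eq_of_mem {F : Type*} [Field F] {k : ℕ} {Y X : Matrix (Fin (k + 1)) (Fin k) F}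
    {a : Fin (k + 1) → F} (h : X ∈ theta Y a) :
    theta Y a = {Z | ∃ u : Fin k → F, Z = X + Matrix.vecMulVec a u} := by
  obtain ⟨w, hw⟩ := h
  ext Z
  constructor
  · rintro ⟨u, rfl⟩
    exact ⟨u - w, by ext i j; simp [hw, Matrix.vecMulVec_apply]; ring⟩
  · rintro ⟨u, rfl⟩
    exact ⟨w + u, by ext i j; simp [hw, Matrix.vecMulVec_apply]; ring⟩

theorem at_most_one_theta_space_through_two_points (F : Type*) [Field F] (k : ℕ)
    (hk : 1 ≤ k) (X₁ X₂ : Matrix (Fin (k + 1)) (Fin k) F) (hne : X₁ ≠ X₂)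
    (Y Y' : Matrix (Fin (k + 1)) (Fin k) F) (hY : Y.rank = k) (hY' : Y'.rank = k)
    (a a' : Fin (k + 1) → F)
    (ha : a ∉ LinearMap.range Y.mulVecLin) (ha' : a' ∉ LinearMap.range Y'.mulVecLin)
    (h1 : X₁ ∈ theta Y a) (h2 : X₂ ∈ theta Y a)
    (h1' : X₁ ∈ theta Y' a') (h2' : X₂ ∈ theta Y' a') :
    theta Y a = theta Y' a' := by
  obtain ⟨u₁, hu₁⟩ := h1
  obtain ⟨u₂, hu₂⟩ := h2
  obtain ⟨u₁', hu₁'⟩ := h1'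
  obtain ⟨u₂', hu₂'⟩ := h2'
  -- key pointwise equality
  have E : ∀ i j, a i * (u₁ j - u₂ j) = a' i * (u₁' j - u₂' j) := by
    intro i j
    have h₁ := congrFun (congrFun hu₁ i) j
    have h₂ := congrFun (congrFun hu₂ i) j
    have h₁' := congrFun (congrFun hu₁' i) j
    have h₂' := congrFun (congrFun hu₂' i) j
    simp only [Matrix.add_apply, Matrix.vecMulVec_apply] at h₁ h₂ h₁' h₂'
    have : X₁ i j - X₂ i j = a i * (u₁ j - u₂ j) := by rw [h₁, h₂]; ring
    have h' : X₁ i j - X₂ i j = a' i * (u₁' j - u₂' j) := by rw [h₁', h₂']; ring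
    rw [← this, h']
  obtain ⟨i₀, j₀, hij⟩ : ∃ i j, X₁ i j ≠ X₂ i j := by
    by_contra h
    push_neg at h
    exact hne (by ext i j; exact h i j)
  have hv : a i₀ * (u₁ j₀ - u₂ j₀) ≠ 0 := by
    have h₁ := congrFun (congrFun hu₁ i₀) j₀
    have h₂ := congrFun (congrFun hu₂ i₀) j₀
    simp only [Matrix.add_apply, Matrix.vecMulVec_apply] at h₁ h₂
    intro h
    apply hij
    rw [h₁, h₂]
    have : a i₀ * u₁ j₀ = a i₀ * u₂ j₀ := by linear_combination h
    rw [this]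
  have hv' : a' i₀ * (u₁' j₀ - u₂' j₀) ≠ 0 := by rw [← E]; exact hv
  have hw' : u₁' j₀ - u₂' j₀ ≠ 0 := fun h => hv' (by rw [h, mul_zero])
  set c : F := (u₁ j₀ - u₂ j₀) / (u₁' j₀ - u₂' j₀) with hc
  have hca : ∀ i, a' i = c * a i := by
    intro i
    have := E i j₀
    rw [hc, div_mul_eq_mul_div, eq_div_iff hw']
    linear_combination -this
  have hc0 : c ≠ 0 := by
    intro h
    apply hv'
    rw [hca i₀, h, zero_mul, zero_mul]
  rw [theta_eq_of_mem ⟨u₁, hu₁⟩, theta_eq_of_mem ⟨u₁', hu₁'⟩]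
  ext Z
  constructor
  · rintro ⟨u, rfl⟩
    refine ⟨c⁻¹ • u, ?_⟩
    ext i j
    simp [Matrix.vecMulVec_apply, hca i]
    field_simp
  · rintro ⟨u, rfl⟩
    refine ⟨c • u, ?_⟩
    ext i j
    simp [Matrix.vecMulVec_apply, hca i]
    ring
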